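/- arXiv:0905.4253 — 2 statements merged into one kernel-verified Lean document; each statement's English description precedes it below -/
import Mathlib

section
/- Let u_1,...,u_r be elements of a commutative ring R in which 2 is invertible, and define γ_i({\bf u}) = (2u_i - (-1)^r)·∏_{j≠i} (u_i+u_j)/(u_i-u_j) (as rational functions when u are indeterminates over ℤ[1/2]), and η_a = ∑_{i=1}^r γ_i u_i^a. Then η_a = q_{a+1}(u) - (1/2)(-1)^r q_a(u) + (1/2)δ_{a,0} for all a ≥ 0; in particular, each η_a is a symmetric polynomial in u_1,...,u_r. -/
open Finset

/-- Generating function `∏ i, (1 + uᵢ t)/(1 - uᵢ t)` in `R[[t]]`, where the factor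
`1/(1 - uᵢ t)` is interpreted as the power series `∑ₖ uᵢ^k t^k`. -/
noncomputable def schurQSeries {R : Type*} [CommRing R] {r : ℕ} (u : Fin r → R) :
    PowerSeries R :=
  ∏ i : Fin r,
    ((1 + PowerSeries.C (u i) * PowerSeries.X) * PowerSeries.mk (fun k => u i ^ k))

/-- The Schur q-function `q_a(u)`: the coefficient of `t^a` in the generating function. -/
noncomputable def schurQ {R : Type*} [CommRing R] {r : ℕ} (u : Fin r → R) (a : ℕ) : R :=
  PowerSeries.coeff a (schurQSeries u)

/-- The signed elementary symmetric function `a_j(u) = (-1)^{r-j} ε_{r-j}(u)`, i.e. the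
coefficient of `t^j` in `∏ i, (t - uᵢ)`. -/
noncomputable def signedESymm {R : Type*} [CommRing R] {r : ℕ} (u : Fin r → R) (j : ℕ) : R :=
  (∏ i : Fin r, (Polynomial.X - Polynomial.C (u i))).coeff j

section AuxLemmas

open Polynomial in


lemma star_poly {K : Type*} [Field K] {r : ℕ} (u : Fin r → K)
    (h0 : ∀ i, u i ≠ 0) (hinj : Function.Injective u) :
    ∏ i : Fin r, (1 + C (u i) * X) =
      C ((-1 : K) ^ r) * ∏ i : Fin r, (1 - C (u i) * X) +
      ∑ i : Fin r, C (2 * ∏ j ∈ univ.erase i, (u i + u j) / (u i - u j)) *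
        ∏ j ∈ univ.erase i, (1 - C (u j) * X) := by
  classical
  rcases Nat.eq_zero_or_pos r with hr | hr
  · subst hr; simp
  set p : Fin r → K := fun i => ∏ j ∈ univ.erase i, (u i + u j) / (u i - u j) with hp
  set N : K[X] := ∏ i : Fin r, (1 + C (u i) * X) with hN
  set D : K[X] := ∏ i : Fin r, (1 - C (u i) * X) with hD
  set Q : Fin r → K[X] := fun i => ∏ j ∈ univ.erase i, (1 - C (u j) * X) with hQ
  set P : K[X] := N - (C ((-1 : K) ^ r) * D + ∑ i : Fin r, C (2 * p i) * Q i) with hP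
  have key : P = 0 := by
    have hdeg1 : ∀ a : K, (1 + C a * X).natDegree ≤ 1 := by
      intro a
      refine le_trans (natDegree_add_le _ _) ?_
      simp [le_trans (natDegree_C_mul_le a X) (le_of_eq natDegree_X)]
    have hdeg1' : ∀ a : K, (1 - C a * X).natDegree ≤ 1 := by
      intro a
      refine le_trans (natDegree_sub_le _ _) ?_
      simp [le_trans (natDegree_C_mul_le a X) (le_of_eq natDegree_X)]
    have hQdeg : ∀ i : Fin r, (Q i).natDegree ≤ r - 1 := by
      intro i
      refine le_trans (natDegree_prod_le _ _) ?_
      refine le_trans (Finset.sum_le_card_nsmul _ _ 1 fun j _ => hdeg1' (u j)) ?_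
      simp [Finset.card_erase_of_mem]
    have hNdeg : N.natDegree ≤ r := by
      refine le_trans (natDegree_prod_le _ _) ?_
      refine le_trans (Finset.sum_le_card_nsmul _ _ 1 fun j _ => hdeg1 (u j)) ?_
      simp
    have hDdeg : D.natDegree ≤ r := by
      refine le_trans (natDegree_prod_le _ _) ?_
      refine le_trans (Finset.sum_le_card_nsmul _ _ 1 fun j _ => hdeg1' (u j)) ?_
      simp
    have hPdeg : P.natDegree ≤ r := by
      refine le_trans (natDegree_sub_le _ _) (max_le hNdeg ?_)
      refine le_trans (natDegree_add_le _ _) (max_le ?_ ?_)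
      · exact le_trans (natDegree_C_mul_le _ _) hDdeg
      · refine Polynomial.natDegree_sum_le_of_forall_le _ _ fun i _ => ?_
        exact le_trans (natDegree_C_mul_le _ _) (le_trans (hQdeg i) (Nat.sub_le r 1))
    have hcoeffN : N.coeff r = ∏ i : Fin r, u i := by
      have := Polynomial.coeff_prod_of_natDegree_le (univ : Finset (Fin r))
        (fun i => 1 + C (u i) * X) 1 (fun i _ => hdeg1 (u i))
      simpa [Polynomial.coeff_one] using this
    have hcoeffD : D.coeff r = ∏ i : Fin r, (-u i) := by
      have := Polynomial.coeff_prod_of_natDegree_le (univ : Finset (Fin r))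
        (fun i => 1 - C (u i) * X) 1 (fun i _ => hdeg1' (u i))
      simpa [Polynomial.coeff_one] using this
    have hcoeffP : P.coeff r = 0 := by
      have hQz : ∀ i : Fin r, (C (2 * p i) * Q i).coeff r = 0 := by
        intro i
        rw [coeff_C_mul,
          Polynomial.coeff_eq_zero_of_natDegree_lt (lt_of_le_of_lt (hQdeg i) (by omega))]
        ring
      rw [hP, Polynomial.coeff_sub, Polynomial.coeff_add, coeff_C_mul, hcoeffN, hcoeffD,
        Polynomial.finset_sum_coeff, Finset.sum_congr rfl fun i _ => hQz i,
        show ∏ i : Fin r, -u i = (-1 : K) ^ r * ∏ i : Fin r, u i by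
          rw [show ((-1 : K)) ^ r = ∏ _i : Fin r, (-1 : K) by simp, ← Finset.prod_mul_distrib]
          simp]
      rw [← mul_assoc, ← mul_pow]
      simp
    -- evaluation at the points (u k)⁻¹
    set s : Finset K := univ.image (fun i => (u i)⁻¹) with hs
    have hscard : s.card = r := by
      rw [hs, Finset.card_image_of_injective _ (fun a b h => hinj (inv_injective h))]
      simp
    have heval : ∀ x ∈ s, P.eval x = 0 := by
      intro x hx
      obtain ⟨k, -, rfl⟩ := Finset.mem_image.mp hx
      have hsub : ∀ j, j ≠ k → u k - u j ≠ 0 := fun j hjk =>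
        sub_ne_zero.mpr fun h => hjk (hinj h.symm)
      rw [hP]
      simp only [hN, hD, hQ]
      simp only [eval_sub, eval_add, eval_mul, eval_prod, Polynomial.eval_finset_sum,
        eval_C, eval_X, eval_one, eval_pow, eval_neg]
      have hDk : ∏ i : Fin r, (1 - u i * (u k)⁻¹) = 0 :=
        Finset.prod_eq_zero (Finset.mem_univ k) (by
          rw [mul_inv_cancel₀ (h0 k)]; ring)
      have hsum : (∑ i : Fin r, (2 * p i) * ∏ j ∈ univ.erase i, (1 - u j * (u k)⁻¹)) =
          (2 * p k) * ∏ j ∈ univ.erase k, (1 - u j * (u k)⁻¹) := by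
        refine Finset.sum_eq_single_of_mem k (Finset.mem_univ k) fun i _ hik => ?_
        rw [Finset.prod_eq_zero (Finset.mem_erase.mpr ⟨hik.symm, Finset.mem_univ k⟩)
          (by rw [mul_inv_cancel₀ (h0 k)]; ring)]
        ring
      rw [hDk, hsum]
      have hmain : ∏ i : Fin r, (1 + u i * (u k)⁻¹) =
          (2 * p k) * ∏ j ∈ univ.erase k, (1 - u j * (u k)⁻¹) := by
        rw [← Finset.mul_prod_erase univ (fun i => 1 + u i * (u k)⁻¹) (Finset.mem_univ k),
          mul_inv_cancel₀ (h0 k)]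
        have hfac : ∀ j ∈ univ.erase k, (1 + u j * (u k)⁻¹) =
            (u k + u j) / (u k - u j) * (1 - u j * (u k)⁻¹) := by
          intro j hj
          have hjk : j ≠ k := (Finset.mem_erase.mp hj).1
          have h1 := h0 k
          have h2 : u k - u j ≠ 0 := hsub j hjk
          field_simp
        rw [Finset.prod_congr rfl hfac, Finset.prod_mul_distrib]
        simp only [hp]
        ring
      rw [hmain]; ring
    by_cases hP0 : P = 0
    · exact hP0
    · have hlt : P.natDegree < r :=
        lt_of_le_of_ne hPdeg fun h => (Polynomial.leadingCoeff_ne_zero.mpr hP0)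
          (by rw [Polynomial.leadingCoeff, h]; exact hcoeffP)
      exact Polynomial.eq_zero_of_natDegree_lt_card_of_eval_eq_zero' P s heval
        (by rw [hscard]; exact hlt)
  exact sub_eq_zero.mp key

lemma geom_inv {K : Type*} [Field K] (a : K) :
    (1 - PowerSeries.C a * PowerSeries.X) * PowerSeries.mk (fun k => a ^ k) = 1 := by
  have h : (1 - PowerSeries.C a * PowerSeries.X) * PowerSeries.mk (fun k => a ^ k) =
      PowerSeries.mk (fun k => a ^ k) -
        PowerSeries.C a * (PowerSeries.X * PowerSeries.mk (fun k => a ^ k)) := by ring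
  ext n
  rw [h]
  rcases n with _ | n
  · simp
  · simp [PowerSeries.coeff_succ_X_mul, PowerSeries.coeff_one]
    ring




section Aux

variable {K : Type*} [Field K] {r : ℕ}

/-- auxiliary: the rational function pᵢ = ∏_{j≠i} (uᵢ+u_j)/(uᵢ-u_j) -/
noncomputable def pAux (u : Fin r → K) (i : Fin r) : K :=
  ∏ j ∈ univ.erase i, (u i + u j) / (u i - u j)

/-- auxiliary: Qᵢ = ∏_{j≠i} (1 - u_j X) as a power series -/
noncomputable def QAux (u : Fin r → K) (i : Fin r) : PowerSeries K :=
  ∏ j ∈ univ.erase i, (1 - PowerSeries.C (u j) * PowerSeries.X)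

/-- auxiliary: D = ∏ (1 - uᵢ X) -/
noncomputable def DAux (u : Fin r → K) : PowerSeries K :=
  ∏ i : Fin r, (1 - PowerSeries.C (u i) * PowerSeries.X)

/-- auxiliary: N = ∏ (1 + uᵢ X) -/
noncomputable def NAux (u : Fin r → K) : PowerSeries K :=
  ∏ i : Fin r, (1 + PowerSeries.C (u i) * PowerSeries.X)

lemma hQD (u : Fin r → K) (i : Fin r) :
    (1 - PowerSeries.C (u i) * PowerSeries.X) * QAux u i = DAux u :=
  Finset.mul_prod_erase univ
    (fun j => 1 - PowerSeries.C (u j) * PowerSeries.X) (Finset.mem_univ i)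

lemma hDmk (u : Fin r → K) (i : Fin r) :
    DAux u * PowerSeries.mk (fun k => u i ^ k) = QAux u i := by
  rw [← hQD u i, mul_assoc,
    mul_comm (QAux u i) (PowerSeries.mk fun k => u i ^ k), ← mul_assoc, geom_inv, one_mul]

lemma hDF (u : Fin r → K) : DAux u * schurQSeries u = NAux u := by
  rw [schurQSeries, DAux, ← Finset.prod_mul_distrib, NAux]
  refine Finset.prod_congr rfl fun i _ => ?_
  rw [mul_left_comm, geom_inv, mul_one]

end Aux

section Aux2

variable {K : Type*} [Field K] {r : ℕ}

lemma starS (u : Fin r → K) (h0 : ∀ i, u i ≠ 0) (hinj : Function.Injective u) :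
    NAux u = PowerSeries.C ((-1) ^ r) * DAux u +
      ∑ i : Fin r, 2 * PowerSeries.C (pAux u i) * QAux u i := by
  have h := congrArg (Polynomial.coeToPowerSeries.ringHom (R := K)) (star_poly u h0 hinj)
  simp only [map_prod, map_sum, map_add, map_mul, map_sub, map_one] at h
  simp only [Polynomial.coeToPowerSeries.ringHom_apply, Polynomial.coe_C, Polynomial.coe_X] at h
  simp only [NAux, DAux, QAux, pAux]
  rw [h]
  congr 1
  refine Finset.sum_congr rfl fun i _ => ?_
  congr 1
  rw [← map_prod (PowerSeries.C (R := K)) _ _, map_ofNat]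

end Aux2

section Aux3

variable {K : Type*} [Field K] {r : ℕ}

lemma sigmaAux (u : Fin r → K) (h0 : ∀ i, u i ≠ 0) (hinj : Function.Injective u) :
    (∑ i : Fin r, 2 * pAux u i) = 1 - (-1 : K) ^ r := by
  have h := congrArg (Polynomial.eval 0) (star_poly u h0 hinj)
  simp only [Polynomial.eval_prod, Polynomial.eval_finset_sum, Polynomial.eval_add,
    Polynomial.eval_sub, Polynomial.eval_mul, Polynomial.eval_one, Polynomial.eval_C,
    Polynomial.eval_X, mul_zero, sub_zero, add_zero, Finset.prod_const_one, mul_one,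
    one_mul] at h
  simp only [pAux]
  linear_combination -h

lemma star2Aux (u : Fin r → K) (h0 : ∀ i, u i ≠ 0) (hinj : Function.Injective u)
    (h2 : (2 : K) ≠ 0) :
    PowerSeries.X * (∑ i : Fin r,
        PowerSeries.C ((2 * u i - (-1) ^ r) * pAux u i) * QAux u i) =
      NAux u * (1 - PowerSeries.C ((-1) ^ r) * PowerSeries.C (1 / 2) * PowerSeries.X) -
        DAux u + PowerSeries.C (1 / 2) * PowerSeries.X * DAux u := by
  have hhalf : 2 * PowerSeries.C (1 / 2 : K) = 1 := by
    rw [show (2 : PowerSeries K) = PowerSeries.C 2 from (map_ofNat _ 2).symm, ← map_mul,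
      show (2 : K) * (1 / 2) = 1 by rw [one_div, mul_inv_cancel₀ h2], map_one]
  have hε2 : PowerSeries.C ((-1 : K) ^ r) * PowerSeries.C ((-1 : K) ^ r) = 1 := by
    rw [← map_mul, ← pow_add, ← two_mul, pow_mul]
    norm_num
  have hσC : (∑ i : Fin r, 2 * PowerSeries.C (pAux u i)) =
      1 - PowerSeries.C ((-1) ^ r) := by
    have h := congrArg (PowerSeries.C (R := K)) (sigmaAux u h0 hinj)
    rw [map_sum, map_sub, map_one] at h
    rw [← h]
    refine Finset.sum_congr rfl fun i _ => ?_
    rw [map_mul, map_ofNat]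
  have hterm : ∀ i : Fin r, PowerSeries.X *
      (PowerSeries.C ((2 * u i - (-1) ^ r) * pAux u i) * QAux u i) =
      (1 - PowerSeries.C ((-1) ^ r) * PowerSeries.C (1 / 2) * PowerSeries.X) *
        (2 * PowerSeries.C (pAux u i) * QAux u i) -
      2 * PowerSeries.C (pAux u i) * DAux u := by
    intro i
    have hCγ : PowerSeries.C ((2 * u i - (-1) ^ r) * pAux u i) =
        (2 * PowerSeries.C (u i) - PowerSeries.C ((-1) ^ r)) *
          PowerSeries.C (pAux u i) := by
      rw [map_mul, map_sub, map_mul, map_ofNat]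
    rw [hCγ]
    linear_combination (-2 * PowerSeries.C (pAux u i)) * hQD u i +
      (PowerSeries.C ((-1) ^ r) * PowerSeries.C (pAux u i) * PowerSeries.X * QAux u i) *
        hhalf
  rw [Finset.mul_sum, Finset.sum_congr rfl fun i _ => hterm i, Finset.sum_sub_distrib,
    ← Finset.mul_sum, ← Finset.sum_mul, hσC]
  linear_combination (PowerSeries.C ((-1) ^ r) * PowerSeries.C (1 / 2) * PowerSeries.X - 1)
      * starS u h0 hinj +
    PowerSeries.C (1 / 2) * PowerSeries.X * DAux u * hε2

end Aux3

section Aux4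

variable {K : Type*} [Field K] {r : ℕ}

lemma XGAux (u : Fin r → K) (h0 : ∀ i, u i ≠ 0) (hinj : Function.Injective u)
    (h2 : (2 : K) ≠ 0) :
    PowerSeries.X * (∑ i : Fin r, PowerSeries.C ((2 * u i - (-1) ^ r) * pAux u i) *
        PowerSeries.mk (fun k => u i ^ k)) =
      schurQSeries u *
        (1 - PowerSeries.C ((-1) ^ r) * PowerSeries.C (1 / 2) * PowerSeries.X) -
        1 + PowerSeries.C (1 / 2) * PowerSeries.X := by
  have hD0 : DAux u ≠ 0 := by
    intro h
    have hc := congrArg (PowerSeries.constantCoeff) h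
    rw [DAux, map_prod] at hc
    simp at hc
  refine mul_left_cancel₀ hD0 ?_
  calc DAux u * (PowerSeries.X * ∑ i : Fin r,
          PowerSeries.C ((2 * u i - (-1) ^ r) * pAux u i) *
            PowerSeries.mk (fun k => u i ^ k))
      = ∑ i : Fin r, PowerSeries.X * (PowerSeries.C ((2 * u i - (-1) ^ r) * pAux u i) *
          (DAux u * PowerSeries.mk (fun k => u i ^ k))) := by
        rw [Finset.mul_sum, Finset.mul_sum]
        exact Finset.sum_congr rfl fun i _ => by ring
    _ = PowerSeries.X * ∑ i : Fin r,
          PowerSeries.C ((2 * u i - (-1) ^ r) * pAux u i) * QAux u i := by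
        rw [Finset.mul_sum]
        exact Finset.sum_congr rfl fun i _ => by rw [hDmk]
    _ = NAux u * (1 - PowerSeries.C ((-1) ^ r) * PowerSeries.C (1 / 2) * PowerSeries.X) -
          DAux u + PowerSeries.C (1 / 2) * PowerSeries.X * DAux u := star2Aux u h0 hinj h2
    _ = DAux u * (schurQSeries u *
          (1 - PowerSeries.C ((-1) ^ r) * PowerSeries.C (1 / 2) * PowerSeries.X) -
          1 + PowerSeries.C (1 / 2) * PowerSeries.X) := by
        rw [← hDF u]; ring

lemma masterAux (u : Fin r → K) (h0 : ∀ i, u i ≠ 0) (hinj : Function.Injective u)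
    (h2 : (2 : K) ≠ 0) (a : ℕ) :
    (∑ i : Fin r,
      ((2 * u i - (-1) ^ r) * ∏ j ∈ univ.erase i, (u i + u j) / (u i - u j)) * u i ^ a) =
    schurQ u (a + 1) - 1 / 2 * (-1) ^ r * schurQ u a +
      1 / 2 * (if a = 0 then 1 else 0) := by
  have hXG := XGAux u h0 hinj h2
  have hexp : schurQSeries u *
        (1 - PowerSeries.C ((-1) ^ r) * PowerSeries.C (1 / 2) * PowerSeries.X) -
        1 + PowerSeries.C (1 / 2) * PowerSeries.X =
      schurQSeries u - PowerSeries.C ((-1) ^ r) *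
          (PowerSeries.C (1 / 2) * (PowerSeries.X * schurQSeries u)) -
        1 + PowerSeries.C (1 / 2) * PowerSeries.X := by ring
  rw [hexp] at hXG
  have h := congrArg (PowerSeries.coeff (a + 1)) hXG
  rw [PowerSeries.coeff_succ_X_mul, map_sum] at h
  simp only [map_sub, map_add, PowerSeries.coeff_C_mul, PowerSeries.coeff_succ_X_mul,
    PowerSeries.coeff_one, PowerSeries.coeff_X, PowerSeries.coeff_mk, pAux] at h
  have hif : (if a + 1 = 1 then (1 : K) else 0) = (if a = 0 then 1 else 0) := by
    by_cases ha : a = 0 <;> simp [ha]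
  rw [if_neg (Nat.succ_ne_zero a), hif] at h
  simp only [schurQ, pAux]
  rw [h]
  ring

end Aux4

end AuxLemmas

/-- with u₁,…,u_r algebraically independent indeterminates (over a ring with 2
invertible, realized in the fraction field of MvPolynomial (Fin r) ℚ), setting
γᵢ = (2uᵢ - (-1)^r)·∏_{j≠i}(uᵢ+u_j)/(uᵢ-u_j) and η_a = ∑ᵢ γᵢ uᵢᵃ, one has
η_a = q_{a+1}(u) - (1/2)(-1)^r q_a(u) + (1/2)δ_{a,0} for all a ≥ 0. -/
theorem eta_eq_schurQ_formula (r : ℕ) (hr : 0 < r) :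
    ∀ a : ℕ,
      (∑ i : Fin r,
        ((2 * (algebraMap (MvPolynomial (Fin r) ℚ) (FractionRing (MvPolynomial (Fin r) ℚ))
              (MvPolynomial.X i)) - (-1) ^ r) *
          ∏ j ∈ Finset.univ.erase i,
            ((algebraMap (MvPolynomial (Fin r) ℚ) _ (MvPolynomial.X i)) +
                algebraMap (MvPolynomial (Fin r) ℚ) _ (MvPolynomial.X j)) /
              ((algebraMap (MvPolynomial (Fin r) ℚ) _ (MvPolynomial.X i)) -
                algebraMap (MvPolynomial (Fin r) ℚ) _ (MvPolynomial.X j))) *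
          (algebraMap (MvPolynomial (Fin r) ℚ) _ (MvPolynomial.X i)) ^ a) =
      schurQ (fun i => algebraMap (MvPolynomial (Fin r) ℚ)
          (FractionRing (MvPolynomial (Fin r) ℚ)) (MvPolynomial.X i)) (a + 1) -
        (1 / 2) * (-1) ^ r *
          schurQ (fun i => algebraMap (MvPolynomial (Fin r) ℚ)
            (FractionRing (MvPolynomial (Fin r) ℚ)) (MvPolynomial.X i)) a +
        (1 / 2) * (if a = 0 then 1 else 0) := by
  intro a
  have hainj : Function.Injective (algebraMap (MvPolynomial (Fin r) ℚ)
      (FractionRing (MvPolynomial (Fin r) ℚ))) := IsFractionRing.injective _ _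
  have h0 : ∀ i : Fin r, algebraMap (MvPolynomial (Fin r) ℚ)
      (FractionRing (MvPolynomial (Fin r) ℚ)) (MvPolynomial.X i) ≠ 0 := fun i => by
    simp [IsFractionRing.to_map_eq_zero_iff, MvPolynomial.X_ne_zero]
  have hinj : Function.Injective (fun i : Fin r => algebraMap (MvPolynomial (Fin r) ℚ)
      (FractionRing (MvPolynomial (Fin r) ℚ)) (MvPolynomial.X i)) :=
    fun i j h => MvPolynomial.X_injective (hainj h)
  have h2 : (2 : FractionRing (MvPolynomial (Fin r) ℚ)) ≠ 0 := by
    haveI : CharZero (FractionRing (MvPolynomial (Fin r) ℚ)) :=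
      charZero_of_injective_algebraMap hainj
    exact two_ne_zero
  exact masterAux _ h0 hinj h2 a
end

section
/- Let R be a commutative ring, and suppose (ω_a)_{a≥0} is a sequence in R satisfying the recursion 2ω_a = ∑_{b=1}^a (-1)^{b-1} ω_{b-1} ω_{a-b} - ω_{a-1} for all odd a ≥ 1 (weak admissibility). If moreover ω_a = ∑_{i=1}^r γ_i u_i^a for some γ_i, u_i ∈ R, then substituting ω_a = η_a(u) with η_a(u) = q_{a+1}(u) + (1/2)(-1)^{r-1} q_a(u) + (1/2)δ_{a,0} (when 2 is invertible) also satisfies this recursion; i.e., the sequence (η_a(u))_{a≥0} satisfies 2η_a = ∑_{b=1}^a (-1)^{b-1} η_{b-1} η_{a-b} - η_{a-1} for all odd a ≥ 1. -/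
open Finset

/-- `η_a(u) = q_{a+1}(u) + (1/2)(-1)^{r-1} q_a(u) + (1/2)δ_{a,0}`. -/
noncomputable def etaSeq {R : Type*} [CommRing R] [Invertible (2 : R)] {r : ℕ}
    (u : Fin r → R) (a : ℕ) : R :=
  schurQ u (a + 1) + ⅟(2 : R) * (-1) ^ (r - 1) * schurQ u a +
    ⅟(2 : R) * (if a = 0 then 1 else 0)

section AuxProofs
open PowerSeries
variable {R : Type*} [CommRing R] {r : ℕ}

theorem geomAuxX (v : R) :
    (1 - PowerSeries.C v * X) * PowerSeries.mk (fun k => v ^ k) = 1 := by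
  have h1 : PowerSeries.mk (fun k => v ^ k) = rescale v (PowerSeries.mk 1) := by
    ext n; simp [coeff_rescale]
  have h2 : (1 - PowerSeries.C v * X) = rescale v (1 - X) := by
    rw [map_sub, map_one, rescale_X]
  rw [h1, h2, ← map_mul, mul_comm, mk_one_mul_one_sub_eq_one, map_one]

theorem rescale_mul_selfX (u : Fin r → R) :
    rescale (-1 : R) (schurQSeries u) * schurQSeries u = 1 := by
  unfold schurQSeries
  rw [map_prod, ← Finset.prod_mul_distrib]
  rw [Finset.prod_eq_one]
  intro i _
  rw [map_mul, map_add, map_one, map_mul, rescale_X]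
  have h1 : rescale (-1 : R) (PowerSeries.mk fun k => u i ^ k)
      = PowerSeries.mk fun k => (-u i) ^ k := by
    ext n; rw [coeff_rescale, PowerSeries.coeff_mk, PowerSeries.coeff_mk]; ring
  have hC : rescale (-1 : R) (PowerSeries.C (u i)) = PowerSeries.C (u i) := by
    ext n; cases n <;> simp [coeff_rescale]
  rw [h1, hC]
  have : (1 + PowerSeries.C (u i) * (PowerSeries.C (-1) * X)) *
        (PowerSeries.mk fun k => (-u i) ^ k) *
      ((1 + PowerSeries.C (u i) * X) * PowerSeries.mk fun k => u i ^ k)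
      = ((1 - PowerSeries.C (u i) * X) * PowerSeries.mk fun k => u i ^ k) *
        ((1 - PowerSeries.C (-u i) * X) * PowerSeries.mk fun k => (-u i) ^ k) := by
    rw [map_neg, map_neg, map_one]; ring
  rw [this, geomAuxX, geomAuxX, mul_one]

theorem schurPX (u : Fin r → R) (n : ℕ) :
    ∑ j ∈ range (n + 1), (-1 : R) ^ j * schurQ u j * schurQ u (n - j)
      = if n = 0 then 1 else 0 := by
  have := congrArg (PowerSeries.coeff n) (rescale_mul_selfX u)
  rw [PowerSeries.coeff_mul, Finset.Nat.sum_antidiagonal_eq_sum_range_succ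
    (f := fun a b => PowerSeries.coeff a (rescale (-1:R) (schurQSeries u)) *
      PowerSeries.coeff b (schurQSeries u))] at this
  simp only [coeff_rescale, PowerSeries.coeff_one] at this
  rw [← this]
  exact Finset.sum_congr rfl fun j _ => by rw [schurQ, schurQ]

theorem schurQ_zero (u : Fin r → R) : schurQ u 0 = 1 := by
  simp [schurQ, schurQSeries, PowerSeries.coeff_zero_eq_constantCoeff, map_prod]

-- A2 : ∑_{j=0}^m (-1)^j q_{j+1} q_{m-j} = q_{m+1}
theorem sumA2 (u : Fin r → R) (m : ℕ) :
    ∑ j ∈ range (m + 1), (-1 : R) ^ j * schurQ u (j + 1) * schurQ u (m - j)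
      = schurQ u (m + 1) := by
  have h := schurPX u (m + 1)
  rw [Finset.sum_range_succ'] at h
  simp only [Nat.succ_sub_succ, pow_succ, pow_zero, one_mul, Nat.sub_zero,
    Nat.succ_ne_zero, if_false, schurQ_zero, mul_one] at h
  have h2 : ∀ j ∈ range (m + 1),
      (-1:R) ^ j * -1 * schurQ u (j + 1) * schurQ u (m - j)
      = -((-1:R) ^ j * schurQ u (j + 1) * schurQ u (m - j)) := by intros; ring
  rw [Finset.sum_congr rfl h2, Finset.sum_neg_distrib] at h
  linear_combination -h

-- A3 : ∑_{j=0}^m (-1)^j q_j q_{m+1-j} = (-1)^m q_{m+1}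
theorem sumA3 (u : Fin r → R) (m : ℕ) :
    ∑ j ∈ range (m + 1), (-1 : R) ^ j * schurQ u j * schurQ u (m + 1 - j)
      = (-1 : R) ^ m * schurQ u (m + 1) := by
  have h := schurPX u (m + 1)
  rw [Finset.sum_range_succ] at h
  simp only [Nat.sub_self, schurQ_zero, mul_one, Nat.succ_ne_zero, if_false,
    pow_succ] at h
  linear_combination h

-- A1 : ∑_{j=0}^m (-1)^j q_{j+1} q_{m+1-j} = q_{m+2} + (-1)^m q_{m+2}
theorem sumA1 (u : Fin r → R) (m : ℕ) :
    ∑ j ∈ range (m + 1), (-1 : R) ^ j * schurQ u (j + 1) * schurQ u (m + 1 - j)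
      = schurQ u (m + 2) + (-1 : R) ^ m * schurQ u (m + 2) := by
  have h := schurPX u (m + 2)
  rw [Finset.sum_range_succ'] at h
  simp only [Nat.succ_sub_succ, Nat.sub_zero, Nat.succ_ne_zero, if_false,
    schurQ_zero, mul_one, pow_succ, pow_zero, one_mul] at h
  -- h : ∑ j ∈ range (m+2), (-1)^j * -1 * q (j+1) * q (m+1-j) + q (m+2) = 0
  rw [Finset.sum_range_succ] at h
  simp only [Nat.sub_self, schurQ_zero, mul_one] at h
  have h2 : ∀ j ∈ range (m + 1),
      (-1:R) ^ j * -1 * schurQ u (j + 1) * schurQ u (m + 1 - j)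
      = -((-1:R) ^ j * schurQ u (j + 1) * schurQ u (m + 1 - j)) := by intros; ring
  rw [Finset.sum_congr rfl h2, Finset.sum_neg_distrib] at h
  linear_combination -h

theorem keyLemma [Invertible (2 : R)] (u : Fin r → R) (m : ℕ) (hm : (-1 : R) ^ m = 1) :
    2 * etaSeq u (m + 1) =
      (∑ j ∈ range (m + 1), (-1 : R) ^ j * etaSeq u j * etaSeq u (m - j)) - etaSeq u m := by
  have hsplit : ∀ j ∈ range (m + 1), (-1 : R) ^ j * etaSeq u j * etaSeq u (m - j) =
      ((-1 : R) ^ j * schurQ u (j + 1) * schurQ u (m - j + 1)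
        + (⅟(2:R) * (-1) ^ (r-1)) * ((-1 : R) ^ j * schurQ u (j + 1) * schurQ u (m - j))
        + (⅟(2:R) * (-1) ^ (r-1)) * ((-1 : R) ^ j * schurQ u j * schurQ u (m - j + 1))
        + ((⅟(2:R) * (-1) ^ (r-1)) * (⅟(2:R) * (-1) ^ (r-1))) *
            ((-1 : R) ^ j * schurQ u j * schurQ u (m - j)))
      + ((if m - j = 0 then (1:R) else 0) *
            (⅟(2:R) * ((-1 : R) ^ j * (schurQ u (j + 1) + (⅟(2:R) * (-1) ^ (r-1)) * schurQ u j)))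
        + (if j = 0 then (1:R) else 0) *
            (⅟(2:R) * ((-1 : R) ^ j * (schurQ u (m - j + 1) + (⅟(2:R) * (-1) ^ (r-1)) * schurQ u (m - j))))
        + (if j = 0 then (1:R) else 0) * ((if m - j = 0 then (1:R) else 0) *
            (⅟(2:R) * ⅟(2:R) * (-1 : R) ^ j))) := by
    intro j _; simp only [etaSeq]; ring
  rw [Finset.sum_congr rfl hsplit]
  rw [Finset.sum_add_distrib, Finset.sum_add_distrib, Finset.sum_add_distrib,
    Finset.sum_add_distrib, Finset.sum_add_distrib, Finset.sum_add_distrib]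
  rw [← Finset.mul_sum, ← Finset.mul_sum, ← Finset.mul_sum]
  have hsub1 : ∀ j ∈ range (m + 1),
      (-1 : R) ^ j * schurQ u (j + 1) * schurQ u (m - j + 1)
      = (-1 : R) ^ j * schurQ u (j + 1) * schurQ u (m + 1 - j) := by
    intro j hj; rw [mem_range] at hj
    congr 2; omega
  have hsub3 : ∀ j ∈ range (m + 1),
      (-1 : R) ^ j * schurQ u j * schurQ u (m - j + 1)
      = (-1 : R) ^ j * schurQ u j * schurQ u (m + 1 - j) := by
    intro j hj; rw [mem_range] at hj
    congr 2; omega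
  rw [Finset.sum_congr rfl hsub1, Finset.sum_congr rfl hsub3, sumA1, sumA2, sumA3, schurPX]
  -- delta sums
  have hd1 : ∑ j ∈ range (m + 1), (if m - j = 0 then (1:R) else 0) *
        (⅟(2:R) * ((-1 : R) ^ j * (schurQ u (j + 1) + (⅟(2:R) * (-1) ^ (r-1)) * schurQ u j)))
      = ⅟(2:R) * ((-1 : R) ^ m * (schurQ u (m + 1) + (⅟(2:R) * (-1) ^ (r-1)) * schurQ u m)) := by
    rw [Finset.sum_eq_single_of_mem m (self_mem_range_succ m)]
    · simp
    · intro j hj hne; rw [mem_range] at hj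
      rw [if_neg (by omega), zero_mul]
  have hd2 : ∑ j ∈ range (m + 1), (if j = 0 then (1:R) else 0) *
        (⅟(2:R) * ((-1 : R) ^ j * (schurQ u (m - j + 1) + (⅟(2:R) * (-1) ^ (r-1)) * schurQ u (m - j))))
      = ⅟(2:R) * (schurQ u (m + 1) + (⅟(2:R) * (-1) ^ (r-1)) * schurQ u m) := by
    rw [Finset.sum_eq_single_of_mem 0 (mem_range.2 (Nat.succ_pos m))]
    · simp
    · intro j hj hne; rw [if_neg hne, zero_mul]
  have hd3 : ∑ j ∈ range (m + 1), (if j = 0 then (1:R) else 0) * ((if m - j = 0 then (1:R) else 0) *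
        (⅟(2:R) * ⅟(2:R) * (-1 : R) ^ j))
      = (if m = 0 then (1:R) else 0) * (⅟(2:R) * ⅟(2:R)) := by
    rw [Finset.sum_eq_single_of_mem 0 (mem_range.2 (Nat.succ_pos m))]
    · simp
    · intro j hj hne; rw [if_neg hne, zero_mul]
  rw [hd1, hd2, hd3]
  have hc2 : ((-1 : R) ^ (r - 1)) * ((-1 : R) ^ (r - 1)) = 1 := by
    rw [← mul_pow]; norm_num
  have h2 : (2 : R) * ⅟(2 : R) = 1 := mul_invOf_self 2
  simp only [etaSeq, Nat.succ_ne_zero, if_false, mul_zero, add_zero]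
  set d : R := if m = 0 then (1:R) else 0 with hd
  linear_combination (-(schurQ u (m+1) + ⅟(2:R) * (-1:R)^(r-1) * schurQ u m + ⅟(2:R) * d)) * h2
    + (-(schurQ u (m+2) + ⅟(2:R) * (-1:R)^(r-1) * schurQ u (m+1) + ⅟(2:R) * schurQ u (m+1)
        + ⅟(2:R) * ⅟(2:R) * (-1:R)^(r-1) * schurQ u m)) * hm
    + (-(⅟(2:R) * ⅟(2:R) * d)) * hc2

end AuxProofs

/-- the sequence (η_a(u)) satisfies the weak admissibility recursion
2η_a = ∑_{b=1}^a (-1)^{b-1} η_{b-1} η_{a-b} - η_{a-1} for all odd a ≥ 1. -/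
theorem eta_weakly_admissible {R : Type*} [CommRing R] [Invertible (2 : R)] {r : ℕ}
    (hr : 0 < r) (u : Fin r → R) :
    ∀ a : ℕ, Odd a →
      2 * etaSeq u a =
        (∑ b ∈ Finset.Icc 1 a, (-1) ^ (b - 1) * etaSeq u (b - 1) * etaSeq u (a - b)) -
          etaSeq u (a - 1) := by
  intro a ha
  obtain ⟨k, hk⟩ := ha
  subst hk
  have hre : ∑ b ∈ Finset.Icc 1 (2 * k + 1),
        (-1 : R) ^ (b - 1) * etaSeq u (b - 1) * etaSeq u (2 * k + 1 - b)
      = ∑ j ∈ range (2 * k + 1), (-1 : R) ^ j * etaSeq u j * etaSeq u (2 * k - j) := by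
    rw [← Finset.Ico_add_one_right_eq_Icc, Finset.sum_Ico_eq_sum_range]
    have h : 2 * k + 1 + 1 - 1 = 2 * k + 1 := by omega
    rw [h]
    refine Finset.sum_congr rfl fun j hj => ?_
    have e1 : 1 + j - 1 = j := by omega
    have e2 : 2 * k + 1 - (1 + j) = 2 * k - j := by omega
    rw [e1, e2]
  rw [hre, show 2 * k + 1 - 1 = 2 * k from rfl]
  exact keyLemma u (2 * k) (by rw [pow_mul]; norm_num)
end
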